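/- arXiv:1705.02767 — 2 statements merged into one kernel-verified Lean document; each statement's English description precedes it below -/
import Mathlib

section
/- Let r ≥ 2 and consider the rank-2 multiarrangement in ℂ^2 (coordinates x_1, x_3) with defining polynomial Q = x_1^r ∏_{j=0}^{r−1} (x_1 − ζ^j x_3)^2 = x_1^r (x_1^r − x_3^r)^2, where ζ is a primitive r-th root of unity. Then the derivations θ_1 = r x_1^{r+1} ∂_1 + ((r+1) x_1^r x_3 − x_3^{r+1}) ∂_3 and θ_2 = x_1^{r−1}( r x_1 x_3^{r−1} ∂_1 + (x_1^r + (r−1) x_3^r) ∂_3 ) form a basis of the derivation module, so the multiarrangement is free with exponents {r+1, 2r−1}. -/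
open MvPolynomial

open scoped Classical

noncomputable section

/-- A (polynomial) derivation on `K[x_1,...,x_n]`, given by its coefficient
vector: `θ` represents `∑ i, θ i * ∂/∂ x i`. -/
abbrev MvDer (n : ℕ) (K : Type*) [Field K] : Type _ := Fin n → MvPolynomial (Fin n) K

/-- Application of a derivation (given by its coefficient vector) to a polynomial,
as a linear map over the polynomial ring. -/
def derAppL {K : Type*} [Field K] {n : ℕ} (f : MvPolynomial (Fin n) K) :
    MvDer n K →ₗ[MvPolynomial (Fin n) K] MvPolynomial (Fin n) K where
  toFun θ := ∑ i, θ i * MvPolynomial.pderiv i f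
  map_add' θ₁ θ₂ := by
    simp [add_mul, Finset.sum_add_distrib]
  map_smul' c θ := by
    simp [Finset.mul_sum, smul_eq_mul, mul_assoc]

/-- The module of derivations `D(A, μ)` of the multiarrangement with defining linear
forms `A` and multiplicity function `μ`:
`D(A,μ) = {θ : θ(α) ∈ α^(μ α) · S for all α ∈ A}`. -/
def Dmod {K : Type*} [Field K] {n : ℕ} (A : Finset (MvPolynomial (Fin n) K))
    (μ : MvPolynomial (Fin n) K → ℕ) :
    Submodule (MvPolynomial (Fin n) K) (MvDer n K) :=
  ⨅ α ∈ A, Submodule.comap (derAppL α) (Ideal.span {α ^ μ α})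

/-- The module of derivations of a multiarrangement given as a finite set of
(form, multiplicity) pairs. -/
def DmodP {K : Type*} [Field K] {n : ℕ} (P : Finset (MvPolynomial (Fin n) K × ℕ)) :
    Submodule (MvPolynomial (Fin n) K) (MvDer n K) :=
  ⨅ p ∈ P, Submodule.comap (derAppL p.1) (Ideal.span {p.1 ^ p.2})

/-- A derivation is homogeneous of polynomial degree `d` if all its coefficient
polynomials are homogeneous of degree `d`. -/
def IsHomogDer {K : Type*} [Field K] {n : ℕ} (θ : MvDer n K) (d : ℕ) : Prop :=
  ∀ i, (θ i).IsHomogeneous d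

/-- `θ` is a basis of the submodule `D` of the module of derivations. -/
def IsBasisOf {K : Type*} [Field K] {n : ℕ} (θ : Fin n → MvDer n K)
    (D : Submodule (MvPolynomial (Fin n) K) (MvDer n K)) : Prop :=
  (∀ i, θ i ∈ D) ∧ LinearIndependent (MvPolynomial (Fin n) K) θ ∧
    Submodule.span (MvPolynomial (Fin n) K) (Set.range θ) = D

/-- `D` is a free module with a homogeneous basis of degrees `e 0, ..., e (n-1)`. -/
def FreeWithExps {K : Type*} [Field K] {n : ℕ}
    (D : Submodule (MvPolynomial (Fin n) K) (MvDer n K)) (e : Fin n → ℕ) : Prop :=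
  ∃ θ : Fin n → MvDer n K, IsBasisOf θ D ∧ ∀ i, IsHomogDer (θ i) (e i)

/-- `D` is a free module with a homogeneous basis whose multiset of degrees is `E`. -/
def FreeWithExpM {K : Type*} [Field K] {n : ℕ}
    (D : Submodule (MvPolynomial (Fin n) K) (MvDer n K)) (E : Multiset ℕ) : Prop :=
  ∃ (θ : Fin n → MvDer n K) (d : Fin n → ℕ), IsBasisOf θ D ∧
    (∀ i, IsHomogDer (θ i) (d i)) ∧ Multiset.map d Finset.univ.val = E

/-- The zero set (kernel) of the linear form given by the polynomial `α`. -/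
def kerV {K : Type*} [Field K] {n : ℕ} (α : MvPolynomial (Fin n) K) : Set (Fin n → K) :=
  {v | MvPolynomial.eval v α = 0}

/-- Pull back a polynomial along a linear embedding `ι : K^m → K^n`; for a linear
form `α` this is the restriction of `α` to the image of `ι`, expressed in the
coordinates of `K^m`. -/
def restrictForm {K : Type*} [Field K] {m n : ℕ} (ι : (Fin m → K) →ₗ[K] (Fin n → K))
    (α : MvPolynomial (Fin n) K) : MvPolynomial (Fin m) K :=
  MvPolynomial.aeval
    (fun i : Fin n => ∑ j : Fin m, MvPolynomial.C (ι (Pi.single j 1) i) * MvPolynomial.X j) α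

/-- `A''` is (a set of defining forms for) the restriction of the arrangement `A`
to the hyperplane `H₀ = ker α₀`, where `ι` is a linear parametrization of `H₀`:
the elements of `A''` are nonzero linear forms with pairwise distinct kernels,
whose kernels are exactly the intersections `H ∩ H₀` for `H ∈ A \ {H₀}`. -/
def IsRestriction {K : Type*} [Field K] {m n : ℕ} (A : Finset (MvPolynomial (Fin n) K))
    (α₀ : MvPolynomial (Fin n) K) (ι : (Fin m → K) →ₗ[K] (Fin n → K))
    (A'' : Finset (MvPolynomial (Fin m) K)) : Prop :=
  (∀ β ∈ A'', β.IsHomogeneous 1 ∧ β ≠ 0) ∧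
  (∀ β₁ ∈ A'', ∀ β₂ ∈ A'', kerV β₁ = kerV β₂ → β₁ = β₂) ∧
  (∀ α ∈ A, α ≠ α₀ → ∃ β ∈ A'', kerV β = kerV (restrictForm ι α)) ∧
  (∀ β ∈ A'', ∃ α ∈ A, α ≠ α₀ ∧ kerV β = kerV (restrictForm ι α))

/-- Ziegler's canonical multiplicity: for a hyperplane `Y = ker β` of the
restriction, `κ(Y) = |A_Y| - 1`, the number of hyperplanes of `A` (other than
`H₀`) lying above `Y`. -/
def zieglerMult {K : Type*} [Field K] {m n : ℕ} (A : Finset (MvPolynomial (Fin n) K))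
    (ι : (Fin m → K) →ₗ[K] (Fin n → K)) (β : MvPolynomial (Fin m) K) : ℕ :=
  ({α : MvPolynomial (Fin n) K |
      α ∈ A ∧ ∀ w ∈ kerV β, MvPolynomial.eval (ι w) α = 0}).ncard - 1

end
noncomputable section AuxRK2
namespace RK2

open MvPolynomial Finset

abbrev A2 := MvPolynomial (Fin 2) ℂ

lemma prod_pow_primes_dvd {α : Type*} [CommMonoidWithZero α] [IsCancelMulZero α] {ι : Type*} [DecidableEq ι]
    (s : Finset ι) (L : ι → α) (e : ι → ℕ)
    (hL : ∀ i ∈ s, Prime (L i)) (hcop : ∀ i ∈ s, ∀ j ∈ s, i ≠ j → ¬ L i ∣ L j)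
    {n : α} (h : ∀ i ∈ s, L i ^ e i ∣ n) : (∏ i ∈ s, L i ^ e i) ∣ n := by
  induction s using Finset.induction_on with
  | empty => simpa using one_dvd n
  | insert _ _ ha ih =>
    rename_i a s
    obtain ⟨m, hm⟩ := ih (fun i hi => hL i (mem_insert_of_mem hi))
      (fun i hi j hj => hcop i (mem_insert_of_mem hi) j (mem_insert_of_mem hj))
      (fun i hi => h i (mem_insert_of_mem hi))
    have hprime := hL a (mem_insert_self a s)
    have hnd : ¬ L a ∣ ∏ i ∈ s, L i ^ e i := by
      intro hd
      obtain ⟨i, hi, hdi⟩ := hprime.dvd_finset_prod_iff _ |>.1 hd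
      exact hcop a (mem_insert_self a s) i (mem_insert_of_mem hi)
        (fun hai => ha (hai ▸ hi)) (hprime.dvd_of_dvd_pow hdi)
    have h2 : L a ^ e a ∣ (∏ i ∈ s, L i ^ e i) * m := hm ▸ h a (mem_insert_self a s)
    have h3 : L a ^ e a ∣ m := hprime.pow_dvd_of_dvd_mul_left _ hnd h2
    rw [Finset.prod_insert ha, hm, mul_comm (L a ^ e a)]
    exact mul_dvd_mul_left _ h3

lemma fse_C (c : ℂ) : (MvPolynomial.finSuccEquiv ℂ 1) (C c : A2)
    = Polynomial.C (C c : MvPolynomial (Fin 1) ℂ) := by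
  simp [finSuccEquiv_apply]

lemma prime_lin (c : ℂ) : Prime (X 0 - C c * X 1 : A2) := by
  rw [← MulEquiv.prime_iff (MvPolynomial.finSuccEquiv ℂ 1).toMulEquiv]
  have h1 : (MvPolynomial.finSuccEquiv ℂ 1) (X 0 - C c * X 1 : A2)
      = Polynomial.X - Polynomial.C (C c * X 0) := by
    have h2 : (1 : Fin 2) = Fin.succ 0 := rfl
    rw [map_sub, map_mul, h2, finSuccEquiv_X_zero, finSuccEquiv_X_succ, fse_C,
      ← Polynomial.C_mul]
  show Prime ((MvPolynomial.finSuccEquiv ℂ 1) _)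
  rw [h1]
  exact Polynomial.prime_X_sub_C _

lemma prime_X0 : Prime (X 0 : A2) := by
  have := prime_lin 0
  rwa [map_zero, zero_mul, sub_zero] at this

lemma prod_lin {r : ℕ} (hr : 0 < r) {ζ : ℂ} (hζ : IsPrimitiveRoot ζ r) :
    ∏ j ∈ range r, (X 0 - C (ζ ^ j) * X 1 : A2) = X 0 ^ r - X 1 ^ r := by
  have hC : IsPrimitiveRoot (C ζ : A2) r :=
    hζ.map_of_injective (C_injective (Fin 2) ℂ)
  have : NeZero r := ⟨hr.ne'⟩
  rw [hC.pow_sub_pow_eq_prod_sub_mul (X 0) (X 1) hr]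
  refine Finset.prod_bij (fun j _ => (C ζ : A2) ^ j) ?_ ?_ ?_ ?_
  · intro j hj
    rw [Polynomial.mem_nthRootsFinset hr, ← pow_mul, mul_comm, pow_mul, hC.pow_eq_one, one_pow]
  · intro i hi j hj hij
    exact hζ.pow_inj (mem_range.1 hi) (mem_range.1 hj)
      (C_injective (Fin 2) ℂ (by simpa [C_pow] using hij))
  · intro μ hμ
    obtain ⟨i, hik, hi⟩ := hC.eq_pow_of_pow_eq_one ((Polynomial.mem_nthRootsFinset hr _).1 hμ)
    exact ⟨i, mem_range.2 hik, hi⟩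
  · intro j hj
    rw [C_pow]

lemma S1 {r : ℕ} (u v c : ℂ) (hc : c ^ r = 1) :
    (r : ℂ) * u ^ (r + 1) - c * (((r : ℂ) + 1) * u ^ r * v - v ^ (r + 1))
      = (u - c * v) * ∑ i ∈ range r, u ^ i * (u ^ (r - i) - (c * v) ^ (r - i)) := by
  have hsum : ∑ i ∈ range r, u ^ i * (u ^ (r - i) - (c * v) ^ (r - i))
      = (r : ℂ) * u ^ r - (c * v) * ∑ i ∈ range r, u ^ i * (c * v) ^ (r - 1 - i) := by
    rw [show ∑ i ∈ range r, u ^ i * (u ^ (r - i) - (c * v) ^ (r - i))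
        = ∑ i ∈ range r, (u ^ r - (c * v) * (u ^ i * (c * v) ^ (r - 1 - i))) from
      Finset.sum_congr rfl fun i hi => by
        rw [mem_range] at hi
        have h1 : i + (r - i) = r := by omega
        have h2 : r - i = (r - 1 - i) + 1 := by omega
        rw [mul_sub, ← pow_add, h1, h2, pow_succ]; ring]
    rw [Finset.sum_sub_distrib, Finset.sum_const, card_range, nsmul_eq_mul, ← Finset.mul_sum]
  have hG := geom_sum₂_mul u (c * v) r
  rw [hsum]
  linear_combination (c * v) * hG - c * v ^ (r + 1) * hc

lemma S2 {r : ℕ} (hr : 0 < r) (u v c : ℂ) (hc : c ^ r = 1) :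
    (r : ℂ) * u * v ^ (r - 1) - c * (u ^ r + ((r : ℂ) - 1) * v ^ r)
      = (u - c * v) * ∑ i ∈ range r, (-(c ^ (r - i))) * v ^ (r - 1 - i) * (u ^ i - (c * v) ^ i) := by
  have hsum : ∑ i ∈ range r, (-(c ^ (r - i))) * v ^ (r - 1 - i) * (u ^ i - (c * v) ^ i)
      = (r : ℂ) * v ^ (r - 1) - c * ∑ i ∈ range r, u ^ i * (c * v) ^ (r - 1 - i) := by
    rw [show ∑ i ∈ range r, (-(c ^ (r - i))) * v ^ (r - 1 - i) * (u ^ i - (c * v) ^ i)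
        = ∑ i ∈ range r, (v ^ (r - 1) - c * (u ^ i * (c * v) ^ (r - 1 - i))) from
      Finset.sum_congr rfl fun i hi => by
        rw [mem_range] at hi
        have h3 : (c * v) ^ i = c ^ i * v ^ i := mul_pow c v i
        have h4 : c ^ (r - i) * c ^ i = c ^ r := by rw [← pow_add]; congr 1; omega
        have h5 : c ^ (r - i) = c * c ^ (r - 1 - i) := by rw [← pow_succ']; congr 1; omega
        have h6 : v ^ (r - 1 - i) * v ^ i = v ^ (r - 1) := by rw [← pow_add]; congr 1; omega
        calc (-(c ^ (r - i))) * v ^ (r - 1 - i) * (u ^ i - (c * v) ^ i)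
            = c ^ (r - i) * c ^ i * (v ^ (r - 1 - i) * v ^ i)
              - (c * c ^ (r - 1 - i)) * v ^ (r - 1 - i) * u ^ i := by rw [← h5, h3]; ring
          _ = v ^ (r - 1) - c * (u ^ i * (c * v) ^ (r - 1 - i)) := by
              rw [h4, hc, h6, mul_pow]; ring]
    rw [Finset.sum_sub_distrib, Finset.sum_const, card_range, nsmul_eq_mul, ← Finset.mul_sum]
  have hG := geom_sum₂_mul u (c * v) r
  have hv : v * v ^ (r - 1) = v ^ r := by
    rw [← pow_succ']; congr 1; omega
  rw [hsum]
  linear_combination c * hG - c * v ^ r * hc + (r : ℂ) * c * hv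

lemma S3 {r : ℕ} (hr : 0 < r) (u v : ℂ) :
    ((r : ℂ) * u ^ (r + 1)) * (u ^ (r - 1) * (u ^ r + ((r : ℂ) - 1) * v ^ r))
      - (((r : ℂ) + 1) * u ^ r * v - v ^ (r + 1)) * (u ^ (r - 1) * ((r : ℂ) * u * v ^ (r - 1)))
      = (r : ℂ) * (u ^ r * (u ^ r - v ^ r) ^ 2) := by
  obtain ⟨s, rfl⟩ : ∃ s, r = s + 1 := ⟨r - 1, by omega⟩
  push_cast
  ring

lemma E1 {r : ℕ} (c : ℂ) (hc : c ^ r = 1) :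
    (C (r : ℂ) * X 0 ^ (r + 1) - C c * (C ((r : ℂ) + 1) * X 0 ^ r * X 1 - X 1 ^ (r + 1)) : A2)
      = (X 0 - C c * X 1) *
        ∑ i ∈ range r, X 0 ^ i * (X 0 ^ (r - i) - (C c * X 1) ^ (r - i)) := by
  apply MvPolynomial.funext
  intro x
  simp only [map_sub, map_mul, map_add, map_pow, map_sum, eval_C, eval_X]
  exact S1 (x 0) (x 1) c hc

lemma div1 {r : ℕ} (c : ℂ) (hc : c ^ r = 1) :
    ((X 0 - C c * X 1) ^ 2 : A2) ∣
      C (r : ℂ) * X 0 ^ (r + 1) - C c * (C ((r : ℂ) + 1) * X 0 ^ r * X 1 - X 1 ^ (r + 1)) := by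
  rw [E1 c hc, sq]
  exact mul_dvd_mul_left _ (Finset.dvd_sum fun i _ =>
    Dvd.dvd.mul_left (sub_dvd_pow_sub_pow _ _ _) _)

lemma E2 {r : ℕ} (hr : 0 < r) (c : ℂ) (hc : c ^ r = 1) :
    (X 0 ^ (r - 1) * (C (r : ℂ) * X 0 * X 1 ^ (r - 1))
        - C c * (X 0 ^ (r - 1) * (X 0 ^ r + C ((r : ℂ) - 1) * X 1 ^ r)) : A2)
      = X 0 ^ (r - 1) * ((X 0 - C c * X 1) *
          ∑ i ∈ range r, (-(C c ^ (r - i))) * X 1 ^ (r - 1 - i) * (X 0 ^ i - (C c * X 1) ^ i)) := by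
  apply MvPolynomial.funext
  intro x
  simp only [map_sub, map_mul, map_add, map_pow, map_sum, map_neg, eval_C, eval_X]
  calc (x 0) ^ (r - 1) * ((r : ℂ) * x 0 * x 1 ^ (r - 1))
        - c * ((x 0) ^ (r - 1) * ((x 0) ^ r + ((r : ℂ) - 1) * (x 1) ^ r))
      = (x 0) ^ (r - 1) * ((r : ℂ) * x 0 * x 1 ^ (r - 1)
          - c * ((x 0) ^ r + ((r : ℂ) - 1) * (x 1) ^ r)) := by ring
    _ = _ := by rw [S2 hr (x 0) (x 1) c hc]

lemma div2 {r : ℕ} (hr : 0 < r) (c : ℂ) (hc : c ^ r = 1) :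
    ((X 0 - C c * X 1) ^ 2 : A2) ∣
      X 0 ^ (r - 1) * (C (r : ℂ) * X 0 * X 1 ^ (r - 1))
        - C c * (X 0 ^ (r - 1) * (X 0 ^ r + C ((r : ℂ) - 1) * X 1 ^ r)) := by
  rw [E2 hr c hc, sq]
  have h : (X 0 - C c * X 1 : A2) ∣
      ∑ i ∈ range r, (-(C c ^ (r - i))) * X 1 ^ (r - 1 - i) * (X 0 ^ i - (C c * X 1) ^ i) :=
    Finset.dvd_sum fun i _ => Dvd.dvd.mul_left (sub_dvd_pow_sub_pow _ _ _) _
  exact Dvd.dvd.mul_left (mul_dvd_mul_left _ h) _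

lemma det_eq {r : ℕ} (hr : 0 < r) :
    ((C (r : ℂ) * X 0 ^ (r + 1)) * (X 0 ^ (r - 1) * (X 0 ^ r + C ((r : ℂ) - 1) * X 1 ^ r))
      - (C ((r : ℂ) + 1) * X 0 ^ r * X 1 - X 1 ^ (r + 1))
          * (X 0 ^ (r - 1) * (C (r : ℂ) * X 0 * X 1 ^ (r - 1))) : A2)
      = C (r : ℂ) * (X 0 ^ r * (X 0 ^ r - X 1 ^ r) ^ 2) := by
  apply MvPolynomial.funext
  intro x
  simp only [map_sub, map_mul, map_add, map_pow, eval_C, eval_X]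
  exact S3 hr (x 0) (x 1)

lemma not_dvd_of_eval {p q : A2} (v : Fin 2 → ℂ) (hp : eval v p = 0) (hq : eval v q ≠ 0) :
    ¬ p ∣ q := by
  rintro ⟨m, rfl⟩
  rw [map_mul, hp, zero_mul] at hq
  exact hq rfl

lemma det_ne {r : ℕ} (hr : 0 < r) :
    (C (r : ℂ) * (X 0 ^ r * (X 0 ^ r - X 1 ^ r) ^ 2) : A2) ≠ 0 := by
  intro h
  have h2 := congrArg (eval ![1, 0]) h
  simp [zero_pow hr.ne'] at h2
  exact hr.ne' h2

lemma dvd_key {r : ℕ} (hr : 0 < r) {ζ : ℂ} (hζ : IsPrimitiveRoot ζ r) {p : A2}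
    (h0 : (X 0 : A2) ^ r ∣ p)
    (hj : ∀ j < r, ((X 0 - C (ζ ^ j) * X 1 : A2)) ^ 2 ∣ p) :
    (X 0 ^ r * (X 0 ^ r - X 1 ^ r) ^ 2 : A2) ∣ p := by
  have hζ0 : ζ ≠ 0 := hζ.ne_zero hr.ne'
  rw [← prod_lin hr hζ, ← Finset.prod_pow]
  have hpair : ∀ i ∈ range r, ∀ j ∈ range r, i ≠ j →
      ¬ ((X 0 - C (ζ ^ i) * X 1 : A2) ∣ (X 0 - C (ζ ^ j) * X 1)) := by
    intro i hi j hj' hij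
    refine not_dvd_of_eval ![ζ ^ i, 1] (by simp) ?_
    simp only [map_sub, map_mul, eval_X, eval_C, Matrix.cons_val_zero, Matrix.cons_val_one,
      Matrix.head_cons, mul_one]
    exact sub_ne_zero.2 fun h => hij (hζ.pow_inj (mem_range.1 hi) (mem_range.1 hj') h)
  have hprod : (∏ j ∈ range r, (X 0 - C (ζ ^ j) * X 1 : A2) ^ 2) ∣ p :=
    prod_pow_primes_dvd _ _ _ (fun j _ => prime_lin _) hpair
      (fun j hjm => hj j (mem_range.1 hjm))
  have hnd : ¬ (X 0 : A2) ∣ ∏ j ∈ range r, (X 0 - C (ζ ^ j) * X 1 : A2) ^ 2 := by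
    intro hd
    obtain ⟨j, hjm, hdj⟩ := (prime_X0.dvd_finset_prod_iff _).1 hd
    refine not_dvd_of_eval (p := (X 0 : A2)) ![0, 1] (by simp) ?_ (prime_X0.dvd_of_dvd_pow hdj)
    simp only [map_sub, map_mul, eval_X, eval_C, Matrix.cons_val_zero, Matrix.cons_val_one,
      Matrix.head_cons, mul_one, zero_sub, neg_ne_zero]
    exact pow_ne_zero _ hζ0
  obtain ⟨m, hm⟩ := hprod
  have h2 : (X 0 : A2) ^ r ∣ m := prime_X0.pow_dvd_of_dvd_mul_left _ hnd (by rwa [← hm])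
  rw [hm, mul_comm ((X 0 : A2) ^ r)]
  exact mul_dvd_mul_left _ h2

lemma homog_X_pow (i : Fin 2) (k : ℕ) : ((X i : A2) ^ k).IsHomogeneous k := by
  rw [X_pow_eq_monomial]
  refine isHomogeneous_monomial _ ?_
  rcases eq_or_ne k 0 with h | h
  · simp [h, Finsupp.degree]
  · exact Finsupp.degree_single _ _

lemma homog_adjust {p : A2} {m n : ℕ} (h : p.IsHomogeneous m) (e : m = n) :
    p.IsHomogeneous n := e ▸ h

end RK2
end AuxRK2

noncomputable section AuxRK2b
namespace RK2
open MvPolynomial Finset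

lemma mem_DmodP_iff {P : Finset (A2 × ℕ)} {θ : MvDer 2 ℂ} :
    θ ∈ DmodP P ↔ ∀ q ∈ P, q.1 ^ q.2 ∣ (θ 0 * pderiv 0 q.1 + θ 1 * pderiv 1 q.1) := by
  simp [DmodP, Submodule.mem_iInf, Submodule.mem_comap, Ideal.mem_span_singleton,
    derAppL, Fin.sum_univ_two, LinearMap.coe_mk, AddHom.coe_mk]

lemma der_X0 (θ : MvDer 2 ℂ) :
    θ 0 * pderiv 0 (X 0 : A2) + θ 1 * pderiv 1 (X 0 : A2) = θ 0 := by
  simp [pderiv_X_self, pderiv_X_of_ne]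

lemma der_lin (θ : MvDer 2 ℂ) (c : ℂ) :
    θ 0 * pderiv 0 (X 0 - C c * X 1 : A2) + θ 1 * pderiv 1 (X 0 - C c * X 1 : A2)
      = θ 0 - C c * θ 1 := by
  simp only [map_sub, pderiv_C_mul, pderiv_X_self, pderiv_X_of_ne (show (0:Fin 2) ≠ 1 by decide),
    pderiv_X_of_ne (show (1:Fin 2) ≠ 0 by decide)]
  ring

end RK2
end AuxRK2b

/-- The rank-2 multiarrangement in `ℂ²` with defining polynomial
`x₁^r (x₁^r - x₃^r)²` has the explicit basis
`θ₁ = r x₁^(r+1) ∂₁ + ((r+1) x₁^r x₃ - x₃^(r+1)) ∂₃` and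
`θ₂ = x₁^(r-1)(r x₁ x₃^(r-1) ∂₁ + (x₁^r + (r-1) x₃^r) ∂₃)`, hence is free with
exponents `{r+1, 2r-1}`. -/
theorem rank2_explicit_basis_free
    (r : ℕ) (hr : 2 ≤ r) (ζ : ℂ) (hζ : IsPrimitiveRoot ζ r)
    (P : Finset (MvPolynomial (Fin 2) ℂ × ℕ))
    (hP : P =
      {((MvPolynomial.X 0 : MvPolynomial (Fin 2) ℂ), r)} ∪
      ((Finset.range r).image fun j =>
        ((MvPolynomial.X 0 - MvPolynomial.C (ζ ^ j) * MvPolynomial.X 1 :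
          MvPolynomial (Fin 2) ℂ), 2)))
    (θ₁ θ₂ : MvDer 2 ℂ)
    (hθ₁ : θ₁ = ![MvPolynomial.C (r : ℂ) * MvPolynomial.X 0 ^ (r + 1),
      MvPolynomial.C ((r : ℂ) + 1) * MvPolynomial.X 0 ^ r * MvPolynomial.X 1 -
        MvPolynomial.X 1 ^ (r + 1)])
    (hθ₂ : θ₂ = ![MvPolynomial.X 0 ^ (r - 1) *
        (MvPolynomial.C (r : ℂ) * MvPolynomial.X 0 * MvPolynomial.X 1 ^ (r - 1)),
      MvPolynomial.X 0 ^ (r - 1) *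
        (MvPolynomial.X 0 ^ r + MvPolynomial.C ((r : ℂ) - 1) * MvPolynomial.X 1 ^ r)]) :
    IsBasisOf ![θ₁, θ₂] (DmodP P) ∧ FreeWithExps (DmodP P) ![r + 1, 2 * r - 1] := by
  classical
  have hr0 : 0 < r := by omega
  have hrne : (r : ℂ) ≠ 0 := Nat.cast_ne_zero.2 hr0.ne'
  have hcj : ∀ j : ℕ, (ζ ^ j) ^ r = 1 := fun j => by
    rw [← pow_mul, mul_comm, pow_mul, hζ.pow_eq_one, one_pow]
  have hθ10 : θ₁ 0 = MvPolynomial.C (r : ℂ) * MvPolynomial.X 0 ^ (r + 1) := by rw [hθ₁]; rfl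
  have hθ11 : θ₁ 1 = MvPolynomial.C ((r : ℂ) + 1) * MvPolynomial.X 0 ^ r * MvPolynomial.X 1 -
      MvPolynomial.X 1 ^ (r + 1) := by rw [hθ₁]; rfl
  have hθ20 : θ₂ 0 = MvPolynomial.X 0 ^ (r - 1) *
      (MvPolynomial.C (r : ℂ) * MvPolynomial.X 0 * MvPolynomial.X 1 ^ (r - 1)) := by
    rw [hθ₂]; rfl
  have hθ21 : θ₂ 1 = MvPolynomial.X 0 ^ (r - 1) *
      (MvPolynomial.X 0 ^ r + MvPolynomial.C ((r : ℂ) - 1) * MvPolynomial.X 1 ^ r) := by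
    rw [hθ₂]; rfl
  have hmemP : ∀ q ∈ P, q = (MvPolynomial.X 0, r) ∨
      ∃ j < r, q = (MvPolynomial.X 0 - MvPolynomial.C (ζ ^ j) * MvPolynomial.X 1, 2) := by
    intro q hq
    rw [hP, Finset.mem_union] at hq
    rcases hq with hq | hq
    · exact Or.inl (Finset.mem_singleton.1 hq)
    · obtain ⟨j, hj, hjq⟩ := Finset.mem_image.1 hq
      exact Or.inr ⟨j, Finset.mem_range.1 hj, hjq.symm⟩
  have hpow01 : (MvPolynomial.X 0 : RK2.A2) ^ (r - 1) * MvPolynomial.X 0 =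
      MvPolynomial.X 0 ^ r := by rw [← pow_succ]; congr 1; omega
  have hX0dvd20 : (MvPolynomial.X 0 : RK2.A2) ^ r ∣ θ₂ 0 := by
    rw [hθ20]
    exact ⟨MvPolynomial.C (r : ℂ) * MvPolynomial.X 1 ^ (r - 1), by rw [← hpow01]; ring⟩
  have hX0dvd10 : (MvPolynomial.X 0 : RK2.A2) ^ r ∣ θ₁ 0 := by
    rw [hθ10]
    exact ⟨MvPolynomial.C (r : ℂ) * MvPolynomial.X 0, by rw [pow_succ]; ring⟩
  -- membership of θ₁ and θ₂
  have hm1 : θ₁ ∈ DmodP P := by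
    rw [RK2.mem_DmodP_iff]
    intro q hq
    rcases hmemP q hq with rfl | ⟨j, hj, rfl⟩
    · dsimp only
      rw [RK2.der_X0]
      exact hX0dvd10
    · dsimp only
      rw [RK2.der_lin, hθ10, hθ11]
      exact RK2.div1 _ (hcj j)
  have hm2 : θ₂ ∈ DmodP P := by
    rw [RK2.mem_DmodP_iff]
    intro q hq
    rcases hmemP q hq with rfl | ⟨j, hj, rfl⟩
    · dsimp only
      rw [RK2.der_X0]
      exact hX0dvd20
    · dsimp only
      rw [RK2.der_lin, hθ20, hθ21]
      exact RK2.div2 hr0 _ (hcj j)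
  -- determinant
  have hdet : θ₁ 0 * θ₂ 1 - θ₁ 1 * θ₂ 0 =
      MvPolynomial.C (r : ℂ) *
        (MvPolynomial.X 0 ^ r * (MvPolynomial.X 0 ^ r - MvPolynomial.X 1 ^ r) ^ 2) := by
    rw [hθ10, hθ11, hθ20, hθ21]
    exact RK2.det_eq hr0
  have hdet_ne : θ₁ 0 * θ₂ 1 - θ₁ 1 * θ₂ 0 ≠ 0 := by
    rw [hdet]; exact RK2.det_ne hr0
  -- linear independence
  have hli : LinearIndependent (MvPolynomial (Fin 2) ℂ) ![θ₁, θ₂] := by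
    rw [Fintype.linearIndependent_iff]
    intro g hg
    have e0 := congrFun hg 0
    have e1 := congrFun hg 1
    simp only [Fin.sum_univ_two, Matrix.cons_val_zero, Matrix.cons_val_one, Matrix.head_cons,
      Pi.add_apply, Pi.smul_apply, smul_eq_mul, Pi.zero_apply] at e0 e1
    have hg0 : g 0 * (θ₁ 0 * θ₂ 1 - θ₁ 1 * θ₂ 0) = 0 := by
      linear_combination θ₂ 1 * e0 - θ₂ 0 * e1
    have hg1 : g 1 * (θ₁ 0 * θ₂ 1 - θ₁ 1 * θ₂ 0) = 0 := by
      linear_combination θ₁ 0 * e1 - θ₁ 1 * e0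
    intro i
    fin_cases i
    · exact (mul_eq_zero.1 hg0).resolve_right hdet_ne
    · exact (mul_eq_zero.1 hg1).resolve_right hdet_ne
  -- span
  have hspan : Submodule.span (MvPolynomial (Fin 2) ℂ) (Set.range ![θ₁, θ₂]) = DmodP P := by
    refine le_antisymm (Submodule.span_le.2 ?_) ?_
    · rintro _ ⟨i, rfl⟩
      fin_cases i
      · exact hm1
      · exact hm2
    · intro θ hθ
      rw [RK2.mem_DmodP_iff] at hθ
      have h0 : (MvPolynomial.X 0 : RK2.A2) ^ r ∣ θ 0 := by
        have hmem : ((MvPolynomial.X 0 : RK2.A2), r) ∈ P := by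
          rw [hP]; exact Finset.mem_union_left _ (Finset.mem_singleton_self _)
        have := hθ _ hmem
        rwa [RK2.der_X0] at this
      have hjd : ∀ j < r, (MvPolynomial.X 0 - MvPolynomial.C (ζ ^ j) * MvPolynomial.X 1 :
          RK2.A2) ^ 2 ∣ (θ 0 - MvPolynomial.C (ζ ^ j) * θ 1) := by
        intro j hj
        have hmem : ((MvPolynomial.X 0 - MvPolynomial.C (ζ ^ j) * MvPolynomial.X 1 :
            RK2.A2), 2) ∈ P := by
          rw [hP]
          exact Finset.mem_union_right _
            (Finset.mem_image_of_mem _ (Finset.mem_range.2 hj))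
        have := hθ _ hmem
        rwa [RK2.der_lin] at this
      have hd1 : (MvPolynomial.X 0 ^ r *
          (MvPolynomial.X 0 ^ r - MvPolynomial.X 1 ^ r) ^ 2 : RK2.A2) ∣
          (θ 0 * θ₂ 1 - θ 1 * θ₂ 0) := by
        apply RK2.dvd_key hr0 hζ
        · exact dvd_sub (h0.mul_right _) (hX0dvd20.mul_left _)
        · intro j hj
          have hLt : (MvPolynomial.X 0 - MvPolynomial.C (ζ ^ j) * MvPolynomial.X 1 :
              RK2.A2) ^ 2 ∣ (θ₂ 0 - MvPolynomial.C (ζ ^ j) * θ₂ 1) := by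
            rw [hθ20, hθ21]; exact RK2.div2 hr0 _ (hcj j)
          have hre : θ 0 * θ₂ 1 - θ 1 * θ₂ 0 =
              (θ 0 - MvPolynomial.C (ζ ^ j) * θ 1) * θ₂ 1 -
                θ 1 * (θ₂ 0 - MvPolynomial.C (ζ ^ j) * θ₂ 1) := by ring
          rw [hre]
          exact dvd_sub ((hjd j hj).mul_right _) (hLt.mul_left _)
      have hd2 : (MvPolynomial.X 0 ^ r *
          (MvPolynomial.X 0 ^ r - MvPolynomial.X 1 ^ r) ^ 2 : RK2.A2) ∣
          (θ₁ 0 * θ 1 - θ₁ 1 * θ 0) := by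
        apply RK2.dvd_key hr0 hζ
        · exact dvd_sub (hX0dvd10.mul_right _) (h0.mul_left _)
        · intro j hj
          have hLt : (MvPolynomial.X 0 - MvPolynomial.C (ζ ^ j) * MvPolynomial.X 1 :
              RK2.A2) ^ 2 ∣ (θ₁ 0 - MvPolynomial.C (ζ ^ j) * θ₁ 1) := by
            rw [hθ10, hθ11]; exact RK2.div1 _ (hcj j)
          have hre : θ₁ 0 * θ 1 - θ₁ 1 * θ 0 =
              θ 1 * (θ₁ 0 - MvPolynomial.C (ζ ^ j) * θ₁ 1) -
                θ₁ 1 * (θ 0 - MvPolynomial.C (ζ ^ j) * θ 1) := by ring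
          rw [hre]
          exact dvd_sub (hLt.mul_left _) ((hjd j hj).mul_left _)
      obtain ⟨f', hf'⟩ := hd1
      obtain ⟨g', hg'⟩ := hd2
      have hrC : MvPolynomial.C (r : ℂ) * MvPolynomial.C ((r : ℂ)⁻¹) = (1 : RK2.A2) := by
        rw [← MvPolynomial.C_mul, mul_inv_cancel₀ hrne, MvPolynomial.C_1]
      set f : RK2.A2 := MvPolynomial.C ((r : ℂ)⁻¹) * f' with hfdef
      set g : RK2.A2 := MvPolynomial.C ((r : ℂ)⁻¹) * g' with hgdef
      have hf : (θ₁ 0 * θ₂ 1 - θ₁ 1 * θ₂ 0) * f = θ 0 * θ₂ 1 - θ 1 * θ₂ 0 := by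
        rw [hdet, hfdef, hf']
        linear_combination (MvPolynomial.X 0 ^ r *
          (MvPolynomial.X 0 ^ r - MvPolynomial.X 1 ^ r) ^ 2 * f' : RK2.A2) * hrC
      have hg : (θ₁ 0 * θ₂ 1 - θ₁ 1 * θ₂ 0) * g = θ₁ 0 * θ 1 - θ₁ 1 * θ 0 := by
        rw [hdet, hgdef, hg']
        linear_combination (MvPolynomial.X 0 ^ r *
          (MvPolynomial.X 0 ^ r - MvPolynomial.X 1 ^ r) ^ 2 * g' : RK2.A2) * hrC
      have hc0 : f * θ₁ 0 + g * θ₂ 0 = θ 0 :=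
        mul_left_cancel₀ hdet_ne (by linear_combination θ₁ 0 * hf + θ₂ 0 * hg)
      have hc1 : f * θ₁ 1 + g * θ₂ 1 = θ 1 :=
        mul_left_cancel₀ hdet_ne (by linear_combination θ₁ 1 * hf + θ₂ 1 * hg)
      have hθeq : θ = f • θ₁ + g • θ₂ := by
        funext i
        fin_cases i
        · simp only [Pi.add_apply, Pi.smul_apply, smul_eq_mul]
          exact hc0.symm
        · simp only [Pi.add_apply, Pi.smul_apply, smul_eq_mul]
          exact hc1.symm
      rw [hθeq]
      exact Submodule.add_mem _
        (Submodule.smul_mem _ f (Submodule.subset_span ⟨0, rfl⟩))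
        (Submodule.smul_mem _ g (Submodule.subset_span ⟨1, rfl⟩))
  -- homogeneity
  have hh1 : IsHomogDer θ₁ (r + 1) := by
    intro i
    fin_cases i
    · show (θ₁ 0).IsHomogeneous (r + 1)
      rw [hθ10]
      exact RK2.homog_adjust
        ((MvPolynomial.isHomogeneous_C _ _).mul (RK2.homog_X_pow 0 (r + 1))) (by omega)
    · show (θ₁ 1).IsHomogeneous (r + 1)
      rw [hθ11]
      refine MvPolynomial.IsHomogeneous.sub ?_ ?_
      · exact RK2.homog_adjust
          (((MvPolynomial.isHomogeneous_C _ _).mul (RK2.homog_X_pow 0 r)).mul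
            (MvPolynomial.isHomogeneous_X _ _)) (by omega)
      · exact RK2.homog_X_pow 1 (r + 1)
  have hh2 : IsHomogDer θ₂ (2 * r - 1) := by
    intro i
    fin_cases i
    · show (θ₂ 0).IsHomogeneous (2 * r - 1)
      rw [hθ20]
      exact RK2.homog_adjust
        ((RK2.homog_X_pow 0 (r - 1)).mul
          (((MvPolynomial.isHomogeneous_C _ _).mul (MvPolynomial.isHomogeneous_X _ _)).mul
            (RK2.homog_X_pow 1 (r - 1)))) (by omega)
    · show (θ₂ 1).IsHomogeneous (2 * r - 1)
      rw [hθ21]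
      refine RK2.homog_adjust ((RK2.homog_X_pow 0 (r - 1)).mul
        ((RK2.homog_X_pow 0 r).add
          (RK2.homog_adjust ((MvPolynomial.isHomogeneous_C _ _).mul (RK2.homog_X_pow 1 r))
            (by omega)))) (by omega)
  have hbasis : IsBasisOf ![θ₁, θ₂] (DmodP P) := by
    refine ⟨?_, hli, hspan⟩
    intro i
    fin_cases i
    · exact hm1
    · exact hm2
  refine ⟨hbasis, ![θ₁, θ₂], hbasis, ?_⟩
  intro i
  fin_cases i
  · exact hh1
  · exact hh2
end

section
/- Let r ≥ 2 and consider the rank-2 multiarrangement in ℂ^2 with defining polynomial Q = x_2^{r+1} x_3^{r+1} (x_2^r − x_3^r). Then this multiarrangement is free with exponents {r+1, 2r+1}. -/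
open MvPolynomial

open scoped Classical

noncomputable section

abbrev R2 := MvPolynomial (Fin 2) ℂ

lemma primeX0 : Prime (X 0 : R2) := by
  have h := (MulEquiv.prime_iff (p := (X 0 : R2)) (MvPolynomial.finSuccEquiv ℂ 1).toMulEquiv).symm
  rw [h]
  show Prime ((MvPolynomial.finSuccEquiv ℂ 1) (X 0))
  rw [finSuccEquiv_X_zero]; exact Polynomial.prime_X

lemma dvd_pow_sub (c : ℂ) (k : ℕ) :
    (X 0 - C c * X 1 : R2) ∣ X 0 ^ k - C (c ^ k) * X 1 ^ k := by
  have h := sub_dvd_pow_sub_pow (X 0 : R2) (C c * X 1) k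
  rwa [mul_pow, ← C_pow] at h

def shiftEquiv (c : ℂ) : R2 ≃ₐ[ℂ] R2 :=
  AlgEquiv.ofAlgHom (aeval ![X 0 - C c * X 1, X 1]) (aeval ![X 0 + C c * X 1, X 1])
    (by
      apply MvPolynomial.algHom_ext
      intro i
      fin_cases i <;> simp)
    (by
      apply MvPolynomial.algHom_ext
      intro i
      fin_cases i <;> simp)

lemma primeL (c : ℂ) : Prime (X 0 - C c * X 1 : R2) := by
  have h := (MulEquiv.prime_iff (p := (X 0 : R2)) (shiftEquiv c).toMulEquiv).symm
  have h2 : (shiftEquiv c).toMulEquiv (X 0 : R2) = X 0 - C c * X 1 := by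
    show aeval ![X 0 - C c * X 1, X 1] (X 0 : R2) = _
    simp
  rw [h2] at h
  exact h.mp primeX0

lemma not_dvd_CX (c : ℂ) (hc : c ≠ 0) (m : ℕ) :
    ¬ ((X 0 - C c * X 1 : R2) ∣ C c * X 1 ^ m) := by
  rintro ⟨w, hw⟩
  have := congrArg (MvPolynomial.eval (![c, 1] : Fin 2 → ℂ)) hw
  simp at this
  exact hc this

lemma not_dvd_L {c d : ℂ} (hcd : c ≠ d) :
    ¬ ((X 0 - C c * X 1 : R2) ∣ (X 0 - C d * X 1 : R2)) := by
  rintro ⟨w, hw⟩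
  have := congrArg (MvPolynomial.eval (![c, 1] : Fin 2 → ℂ)) hw
  simp at this
  exact hcd (sub_eq_zero.mp this)

lemma prod_dvd_primes {ι : Type*} {A : Type*} [CommRing A] [IsDomain A]
    (s : Finset ι) (p : ι → A) (n : A)
    (hp : ∀ i ∈ s, Prime (p i)) (hnd : ∀ i ∈ s, ∀ j ∈ s, i ≠ j → ¬ p i ∣ p j)
    (hdvd : ∀ i ∈ s, p i ∣ n) : (∏ i ∈ s, p i) ∣ n := by
  classical
  induction s using Finset.induction_on generalizing n with
  | empty => simp
  | insert a s ha ih =>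
    obtain ⟨k, hk⟩ := hdvd a (Finset.mem_insert_self a s)
    rw [Finset.prod_insert ha, hk]
    refine mul_dvd_mul_left _ (ih k (fun i hi => hp i (Finset.mem_insert_of_mem hi))
      (fun i hi j hj => hnd i (Finset.mem_insert_of_mem hi) j (Finset.mem_insert_of_mem hj))
      (fun i hi => ?_))
    have hpi := hp i (Finset.mem_insert_of_mem hi)
    have hin : p i ∣ p a * k := hk ▸ hdvd i (Finset.mem_insert_of_mem hi)
    rcases hpi.dvd_or_dvd hin with h | h
    · exact absurd h (hnd i (Finset.mem_insert_of_mem hi) a (Finset.mem_insert_self a s)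
        (by rintro rfl; exact ha hi))
    · exact h

lemma scalar_prod {r : ℕ} (hr : 0 < r) {ζ : ℂ} (hζ : IsPrimitiveRoot ζ r) (t : ℂ) :
    ∏ j ∈ Finset.range r, (t - ζ ^ j) = t ^ r - 1 := by
  classical
  have hinj : Set.InjOn (fun j => ζ ^ j) (Finset.range r) := by
    intro i hi j hj h
    exact hζ.pow_inj (Finset.mem_range.mp hi) (Finset.mem_range.mp hj) h
  have hsub : (Finset.range r).image (fun j => ζ ^ j) ⊆ Polynomial.nthRootsFinset r (1 : ℂ) := by
    intro z hz
    simp only [Finset.mem_image] at hz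
    obtain ⟨j, _, rfl⟩ := hz
    rw [Polynomial.mem_nthRootsFinset hr, ← pow_mul, mul_comm, pow_mul, hζ.pow_eq_one, one_pow]
  have hcard : ((Finset.range r).image (fun j => ζ ^ j)).card = r := by
    rw [Finset.card_image_of_injOn hinj, Finset.card_range]
  have heq : (Finset.range r).image (fun j => ζ ^ j) = Polynomial.nthRootsFinset r (1 : ℂ) :=
    Finset.eq_of_subset_of_card_le hsub (by rw [hcard, hζ.card_nthRootsFinset])
  have hpoly := Polynomial.X_pow_sub_one_eq_prod hr hζ
  have := congrArg (Polynomial.eval t) hpoly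
  simp only [Polynomial.eval_sub, Polynomial.eval_pow, Polynomial.eval_X, Polynomial.eval_one,
    Polynomial.eval_prod, Polynomial.eval_C] at this
  rw [this, ← heq, Finset.prod_image (fun i hi j hj h => hinj hi hj h)]

lemma prod_L {r : ℕ} (hr : 0 < r) {ζ : ℂ} (hζ : IsPrimitiveRoot ζ r) :
    ∏ j ∈ Finset.range r, (X 0 - C (ζ ^ j) * X 1 : R2) = X 0 ^ r - X 1 ^ r := by
  apply MvPolynomial.funext
  intro v
  simp only [map_prod, map_sub, map_pow, map_mul, eval_X, eval_C]
  by_cases hv : v 1 = 0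
  · simp [hv, Finset.prod_congr rfl, hr.ne']
  · have key := scalar_prod hr hζ (v 0 / v 1)
    have : ∏ j ∈ Finset.range r, (v 0 - ζ ^ j * v 1)
        = ∏ j ∈ Finset.range r, (v 1 * (v 0 / v 1 - ζ ^ j)) := by
      apply Finset.prod_congr rfl
      intro j _
      field_simp
    rw [this, Finset.prod_mul_distrib, Finset.prod_const, Finset.card_range, key]
    have hv' : v 1 ^ r ≠ 0 := pow_ne_zero _ hv
    rw [div_pow, mul_sub, mul_div_assoc', mul_comm (v 1 ^ r) (v 0 ^ r), mul_div_assoc, div_self hv', mul_one, mul_one]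

lemma derApp_X0 (θ : MvDer 2 ℂ) : derAppL (X 0 : R2) θ = θ 0 := by
  simp [derAppL, Fin.sum_univ_two, pderiv_X]

lemma derApp_X1 (θ : MvDer 2 ℂ) : derAppL (X 1 : R2) θ = θ 1 := by
  simp [derAppL, Fin.sum_univ_two, pderiv_X]

lemma derApp_L (c : ℂ) (θ : MvDer 2 ℂ) :
    derAppL (X 0 - C c * X 1 : R2) θ = θ 0 - C c * θ 1 := by
  simp [derAppL, Fin.sum_univ_two, pderiv_X]
  ring

lemma memD {r : ℕ} {ζ : ℂ} (θ : MvDer 2 ℂ) :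
    θ ∈ DmodP ({((X 0 : R2), r+1), ((X 1 : R2), r+1)} ∪
      (Finset.range r).image fun j => ((X 0 - C (ζ^j) * X 1 : R2), 1)) ↔
    ((X 0 : R2)^(r+1) ∣ θ 0 ∧ (X 1 : R2)^(r+1) ∣ θ 1 ∧
      ∀ j < r, (X 0 - C (ζ^j) * X 1 : R2) ∣ (θ 0 - C (ζ^j) * θ 1)) := by
  classical
  simp only [DmodP, Submodule.mem_iInf, Submodule.mem_comap, Ideal.mem_span_singleton,
    Finset.mem_union, Finset.mem_insert, Finset.mem_singleton, Finset.mem_image,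
    Finset.mem_range]
  constructor
  · intro h
    refine ⟨?_, ?_, fun j hj => ?_⟩
    · have := h ((X 0 : R2), r+1) (Or.inl (Or.inl rfl))
      rwa [derApp_X0] at this
    · have := h ((X 1 : R2), r+1) (Or.inl (Or.inr rfl))
      rwa [derApp_X1] at this
    · have := h ((X 0 - C (ζ^j) * X 1 : R2), 1) (Or.inr ⟨j, hj, rfl⟩)
      rwa [derApp_L, pow_one] at this
  · rintro ⟨h0, h1, hL⟩ p ((rfl | rfl) | ⟨j, hj, rfl⟩)
    · rwa [derApp_X0]
    · rwa [derApp_X1]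
    · rw [derApp_L, pow_one]
      exact hL j hj

end
/-- The rank-2 multiarrangement in `ℂ²` with defining polynomial
`x₂^(r+1) x₃^(r+1) (x₂^r - x₃^r)` is free with exponents `{r+1, 2r+1}`. -/
theorem Gr13_ziegler_restriction_free
    (r : ℕ) (hr : 2 ≤ r) (ζ : ℂ) (hζ : IsPrimitiveRoot ζ r)
    (P : Finset (MvPolynomial (Fin 2) ℂ × ℕ))
    (hP : P =
      {((MvPolynomial.X 0 : MvPolynomial (Fin 2) ℂ), r + 1),
       ((MvPolynomial.X 1 : MvPolynomial (Fin 2) ℂ), r + 1)} ∪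
      ((Finset.range r).image fun j =>
        ((MvPolynomial.X 0 - MvPolynomial.C (ζ ^ j) * MvPolynomial.X 1 :
          MvPolynomial (Fin 2) ℂ), 1))) :
    FreeWithExps (DmodP P) ![r + 1, 2 * r + 1] := by
  classical
  subst hP
  have hr0 : 0 < r := by omega
  have hζr : ∀ j : ℕ, (ζ ^ j) ^ r = 1 := fun j => by
    rw [← pow_mul, mul_comm, pow_mul, hζ.pow_eq_one, one_pow]
  have hc1 : ∀ j : ℕ, (ζ ^ j) ^ (r + 1) = ζ ^ j := fun j => by
    rw [pow_succ, hζr, one_mul]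
  have hζ0 : ∀ j : ℕ, (ζ : ℂ) ^ j ≠ 0 := fun j => pow_ne_zero _ (hζ.ne_zero hr0.ne')
  set θ₁ : MvDer 2 ℂ := ![X 0 ^ (r + 1), X 1 ^ (r + 1)] with hθ₁
  set θ₂ : MvDer 2 ℂ := ![X 0 ^ (2 * r + 1), X 1 ^ (2 * r + 1)] with hθ₂
  have hθ₁0 : θ₁ 0 = X 0 ^ (r + 1) := rfl
  have hθ₁1 : θ₁ 1 = X 1 ^ (r + 1) := rfl
  have hθ₂0 : θ₂ 0 = X 0 ^ (2 * r + 1) := rfl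
  have hθ₂1 : θ₂ 1 = X 1 ^ (2 * r + 1) := rfl
  have hne : (X 0 : R2) ^ r - (X 1 : R2) ^ r ≠ 0 := by
    intro h
    have := congrArg (MvPolynomial.eval (![1, 0] : Fin 2 → ℂ)) h
    simp [hr0.ne'] at this
  -- membership of θ₁
  have hm1 : θ₁ ∈ DmodP ({((X 0 : R2), r + 1), ((X 1 : R2), r + 1)} ∪
      (Finset.range r).image fun j => ((X 0 - C (ζ ^ j) * X 1 : R2), 1)) := by
    rw [memD]
    refine ⟨by rw [hθ₁0], by rw [hθ₁1], fun j hj => ?_⟩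
    rw [hθ₁0, hθ₁1]
    have h := dvd_pow_sub (ζ ^ j) (r + 1)
    rwa [hc1 j] at h
  have hm2 : θ₂ ∈ DmodP ({((X 0 : R2), r + 1), ((X 1 : R2), r + 1)} ∪
      (Finset.range r).image fun j => ((X 0 - C (ζ ^ j) * X 1 : R2), 1)) := by
    rw [memD]
    refine ⟨by rw [hθ₂0]; exact pow_dvd_pow _ (by omega),
            by rw [hθ₂1]; exact pow_dvd_pow _ (by omega), fun j hj => ?_⟩
    rw [hθ₂0, hθ₂1]
    have h := dvd_pow_sub (ζ ^ j) (2 * r + 1)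
    have hc2 : (ζ ^ j) ^ (2 * r + 1) = ζ ^ j := by
      rw [pow_succ, mul_comm 2 r, pow_mul, hζr j, one_pow, one_mul]
    rwa [hc2] at h
  -- linear independence
  have hli : LinearIndependent R2 ![θ₁, θ₂] := by
    rw [Fintype.linearIndependent_iff]
    intro g hg
    have e0 : g 0 * X 0 ^ (r + 1) + g 1 * X 0 ^ (2 * r + 1) = 0 := by
      have := congrFun hg 0
      simpa [Fin.sum_univ_two, hθ₁0, hθ₂0] using this
    have e1 : g 0 * X 1 ^ (r + 1) + g 1 * X 1 ^ (2 * r + 1) = 0 := by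
      have := congrFun hg 1
      simpa [Fin.sum_univ_two, hθ₁1, hθ₂1] using this
    have key : g 1 * (X 0 ^ (r + 1) * X 1 ^ (r + 1) * (X 0 ^ r - X 1 ^ r)) = 0 := by
      linear_combination (X 1 ^ (r + 1) : R2) * e0 - (X 0 ^ (r + 1) : R2) * e1
    have hg1 : g 1 = 0 := by
      rcases mul_eq_zero.mp key with h | h
      · exact h
      · exact absurd h (by
          refine mul_ne_zero (mul_ne_zero ?_ ?_) hne <;>
            exact pow_ne_zero _ (MvPolynomial.X_ne_zero _))
    have hg0 : g 0 = 0 := by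
      rw [hg1, zero_mul, add_zero, mul_eq_zero] at e0
      rcases e0 with h | h
      · exact h
      · exact absurd h (pow_ne_zero _ (MvPolynomial.X_ne_zero _))
    intro i
    fin_cases i
    · exact hg0
    · exact hg1
  -- span
  have hspan : Submodule.span R2 (Set.range ![θ₁, θ₂]) =
      DmodP ({((X 0 : R2), r + 1), ((X 1 : R2), r + 1)} ∪
        (Finset.range r).image fun j => ((X 0 - C (ζ ^ j) * X 1 : R2), 1)) := by
    apply le_antisymm
    · rw [Submodule.span_le]
      rintro x ⟨i, rfl⟩
      fin_cases i
      · exact hm1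
      · exact hm2
    · intro θ hθ
      rw [memD] at hθ
      obtain ⟨⟨p', hp'⟩, ⟨q', hq'⟩, hLd⟩ := hθ
      have hdvd : ∀ j < r, (X 0 - C (ζ ^ j) * X 1 : R2) ∣ (p' - q') := by
        intro j hj
        have h1 : (X 0 - C (ζ ^ j) * X 1 : R2) ∣
            (X 0 ^ (r + 1) - C (ζ ^ j) * X 1 ^ (r + 1)) * p' := by
          have h := dvd_pow_sub (ζ ^ j) (r + 1)
          rw [hc1 j] at h
          exact h.mul_right p'
        have h2 : (X 0 - C (ζ ^ j) * X 1 : R2) ∣ θ 0 - C (ζ ^ j) * θ 1 := hLd j hj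
        have h3 : (X 0 - C (ζ ^ j) * X 1 : R2) ∣ (C (ζ ^ j) * X 1 ^ (r + 1)) * (p' - q') := by
          have heq : (C (ζ ^ j) * X 1 ^ (r + 1) : R2) * (p' - q') =
              (θ 0 - C (ζ ^ j) * θ 1) - (X 0 ^ (r + 1) - C (ζ ^ j) * X 1 ^ (r + 1)) * p' := by
            rw [hp', hq']; ring
          rw [heq]
          exact h2.sub h1
        rcases (primeL (ζ ^ j)).dvd_or_dvd h3 with h | h
        · exact absurd h (not_dvd_CX (ζ ^ j) (hζ0 j) (r + 1))
        · exact h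
      have hprod : (X 0 ^ r - X 1 ^ r : R2) ∣ (p' - q') := by
        rw [← prod_L hr0 hζ]
        refine prod_dvd_primes (Finset.range r) _ _ (fun j _ => primeL _)
          (fun i hi j hj hij => not_dvd_L fun h => hij
            (hζ.pow_inj (Finset.mem_range.mp hi) (Finset.mem_range.mp hj) h))
          (fun j hj => hdvd j (Finset.mem_range.mp hj))
      obtain ⟨w, hw⟩ := hprod
      have hrep : θ = (p' - w * X 0 ^ r) • θ₁ + w • θ₂ := by
        funext i
        fin_cases i
        · show θ 0 = (p' - w * X 0 ^ r) • θ₁ 0 + w • θ₂ 0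
          rw [hθ₁0, hθ₂0, smul_eq_mul, smul_eq_mul]
          linear_combination hp'
        · show θ 1 = (p' - w * X 0 ^ r) • θ₁ 1 + w • θ₂ 1
          rw [hθ₁1, hθ₂1, smul_eq_mul, smul_eq_mul]
          linear_combination hq' - (X 1 ^ (r + 1) : R2) * hw
      rw [hrep]
      exact Submodule.add_mem _
        (Submodule.smul_mem _ _ (Submodule.subset_span ⟨0, rfl⟩))
        (Submodule.smul_mem _ _ (Submodule.subset_span ⟨1, rfl⟩))
  refine ⟨![θ₁, θ₂], ⟨fun i => ?_, hli, hspan⟩, fun i => ?_⟩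
  · fin_cases i
    · exact hm1
    · exact hm2
  · fin_cases i
    · intro k
      fin_cases k
      · show ((X 0 : R2) ^ (r + 1)).IsHomogeneous (r + 1)
        exact isHomogeneous_X_pow _ _
      · show ((X 1 : R2) ^ (r + 1)).IsHomogeneous (r + 1)
        exact isHomogeneous_X_pow _ _
    · intro k
      fin_cases k
      · show ((X 0 : R2) ^ (2 * r + 1)).IsHomogeneous (2 * r + 1)
        exact isHomogeneous_X_pow _ _
      · show ((X 1 : R2) ^ (2 * r + 1)).IsHomogeneous (2 * r + 1)
        exact isHomogeneous_X_pow _ _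
end
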